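/- Let G=(V,E) be a finite simple graph, s,t ∈ V two distinct terminal nodes, d a positive integer, and e = {x,y} ∈ E an edge with x,y,s,t pairwise distinct. If d_{G−y−t}(s,x) + d_{G−s−x}(y,t) ≥ d and d_{G−x−t}(s,y) + d_{G−s−y}(x,t) ≥ d, where G−u−v denotes the graph obtained from G by deleting the vertices u and v (together with all incident edges), then e is irrelevant for the two-terminal diameter-constrained structure function φ_d. -/

import Mathlib

open Classical Finset

noncomputable section

/-- The two-terminal diameter-constrained structure function `φ_d`:
`PhiStruct s t d E'` holds iff the spanning subgraph `(V, E')` contains a simple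
`s`–`t` path with at most `d` edges. -/
def PhiStruct {V : Type*} (s t : V) (d : ℕ) (E' : Finset (Sym2 V)) : Prop :=
  ∃ w : (SimpleGraph.fromEdgeSet (↑E' : Set (Sym2 V))).Walk s t, w.IsPath ∧ w.length ≤ d

/-- The edge `e` is irrelevant for `φ_d`: `φ_d (E' ∪ {e}) = φ_d (E' \ {e})`
for every subset `E'` of the edge set of `G`. -/
def Irrelevant {V : Type*} [Fintype V] [DecidableEq V]
    (G : SimpleGraph V) [DecidableRel G.Adj] (s t : V) (d : ℕ) (e : Sym2 V) : Prop :=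
  ∀ E' ⊆ G.edgeFinset,
    (PhiStruct s t d (insert e E') ↔ PhiStruct s t d (E'.erase e))

/-- The graph obtained from `G` by deleting the vertices in `S` (with all incident
edges); it is kept on the same vertex type, the deleted vertices becoming isolated. -/
def deleteVerts {V : Type*} (G : SimpleGraph V) (S : Set V) : SimpleGraph V where
  Adj a b := G.Adj a b ∧ a ∉ S ∧ b ∉ S
  symm := ⟨fun _ _ h => ⟨h.1.symm, h.2.2, h.2.1⟩⟩
  loopless := ⟨fun a h => G.loopless.irrefl a h.1⟩

/-- If a path from `x` to `t` uses the edge `s(x,y)`, then that edge is the first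
step, and the rest is a path from `y` to `t` avoiding `x`. -/
lemma exists_tail_of_mem_edges {V : Type*} {H : SimpleGraph V} {x y t : V}
    (w : H.Walk x t) (hw : w.IsPath) (he : s(x, y) ∈ w.edges) :
    ∃ p : H.Walk y t, p.IsPath ∧ x ∉ p.support ∧ p.support ⊆ w.support ∧
      p.edges ⊆ w.edges ∧ p.length + 1 = w.length := by
  cases w with
  | nil => simp at he
  | @cons _ b _ h q =>
    rw [SimpleGraph.Walk.edges_cons, List.mem_cons] at he
    rcases he with he | he
    · have hb : y = b := by
        rw [Sym2.eq_iff] at he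
        rcases he with ⟨_, h2⟩ | ⟨h1, _⟩
        · exact h2
        · exact absurd h1 h.ne
      subst hb
      rw [SimpleGraph.Walk.cons_isPath_iff] at hw
      refine ⟨q, hw.1, hw.2, ?_, ?_, by simp⟩
      · intro a ha
        rw [SimpleGraph.Walk.support_cons]
        exact List.mem_cons_of_mem _ ha
      · intro a ha
        rw [SimpleGraph.Walk.edges_cons]
        exact List.mem_cons_of_mem _ ha
    · exfalso
      rw [SimpleGraph.Walk.cons_isPath_iff] at hw
      exact hw.2 (q.fst_mem_support_of_mem_edges he)

/-- if `x, y, s, t` are pairwise distinct,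
`d_{G-y-t}(s,x) + d_{G-s-x}(y,t) ≥ d` and `d_{G-x-t}(s,y) + d_{G-s-y}(x,t) ≥ d`,
then the edge `e = {x,y}` is irrelevant for `φ_d`. -/
theorem irrelevant_of_distance_condition_three
    {V : Type*} [Fintype V] [DecidableEq V] (G : SimpleGraph V) [DecidableRel G.Adj]
    (s t : V) (hst : s ≠ t) (d : ℕ) (hd : 1 ≤ d) (x y : V) (hxy : G.Adj x y)
    (hxs : x ≠ s) (hxt : x ≠ t) (hys : y ≠ s) (hyt : y ≠ t)
    (h1 : (d : ℕ∞) ≤ (deleteVerts G {y, t}).edist s x + (deleteVerts G {s, x}).edist y t)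
    (h2 : (d : ℕ∞) ≤ (deleteVerts G {x, t}).edist s y + (deleteVerts G {s, y}).edist x t) :
    Irrelevant G s t d s(x, y) := by
  intro E' hE'
  constructor
  · rintro ⟨w, hw, hwl⟩
    by_cases hme : s(x, y) ∈ w.edges
    · exfalso
      -- the path uses the edge {x,y}; derive a contradiction
      have hxsup : x ∈ w.support := w.fst_mem_support_of_mem_edges hme
      set w1 := w.takeUntil x hxsup with hw1def
      set w2 := w.dropUntil x hxsup with hw2def
      have hspec : w1.append w2 = w := w.take_spec hxsup
      have hedges : w.edges = w1.edges ++ w2.edges := by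
        rw [← hspec, SimpleGraph.Walk.edges_append]
      have hsup : w.support = w1.support ++ w2.support.tail := by
        conv_lhs => rw [← hspec]
        exact SimpleGraph.Walk.support_append _ _
      have hlen : w1.length + w2.length = w.length := by
        conv_rhs => rw [← hspec]
        exact (SimpleGraph.Walk.length_append _ _).symm
      have hnd : (w1.support ++ w2.support.tail).Nodup := by
        rw [← hsup]; exact hw.support_nodup
      have hdisj : ∀ a ∈ w1.support, a ∉ w2.support.tail :=
        fun a ha hb => (List.nodup_append'.mp hnd).2.2 ha hb
      have htail : ∀ a ∈ w2.support, a ≠ x → a ∈ w2.support.tail := by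
        intro a ha hax
        rw [w2.support_eq_cons] at ha
        rcases List.mem_cons.mp ha with h | h
        · exact absurd h hax
        · exact h
      -- generic transfer lemma for subwalks avoiding e and two vertices
      have key : ∀ {u v : V} (S : Set V) (q : (SimpleGraph.fromEdgeSet
            (↑(insert s(x, y) E') : Set (Sym2 V))).Walk u v),
          s(x, y) ∉ q.edges → (∀ a ∈ S, a ∉ q.support) →
          ∀ p' ∈ q.edges, p' ∈ (deleteVerts G S).edgeSet := by
        intro u v S q hq hS p' hp'
        induction p' using Sym2.ind with
        | _ a b =>
          have haw : a ∈ q.support := q.fst_mem_support_of_mem_edges hp'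
          have hbw : b ∈ q.support := q.snd_mem_support_of_mem_edges hp'
          have hne : s(a, b) ≠ s(x, y) := by
            intro h
            exact absurd hp' (by rw [h]; exact hq)
          have hmem : s(a, b) ∈ (insert s(x, y) E' : Finset (Sym2 V)) := by
            have := q.edges_subset_edgeSet hp'
            rw [SimpleGraph.edgeSet_fromEdgeSet] at this
            exact_mod_cast this.1
          have hEm : s(a, b) ∈ E' := by
            rcases Finset.mem_insert.mp hmem with h | h
            · exact absurd h hne
            · exact h
          have hG : G.Adj a b := by
            have := hE' hEm
            rwa [SimpleGraph.mem_edgeFinset, SimpleGraph.mem_edgeSet] at this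
          rw [SimpleGraph.mem_edgeSet]
          show G.Adj a b ∧ a ∉ S ∧ b ∉ S
          exact ⟨hG, fun haS => hS a haS haw, fun hbS => hS b hbS hbw⟩
      have hme' := hme
      rw [hedges] at hme'
      rcases List.mem_append.mp hme' with he1 | he2
      · -- order s … y,x … t : use h2
        have hw1 : w1.IsPath := hw.takeUntil hxsup
        have hyw1 : y ∈ w1.support := w1.snd_mem_support_of_mem_edges he1
        obtain ⟨q, hq, hxq, hqsub, hqe, hqlen⟩ :=
          exists_tail_of_mem_edges w1.reverse hw1.reverse
            (by rw [SimpleGraph.Walk.edges_reverse, List.mem_reverse]; exact he1)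
        have hqsub' : ∀ a ∈ q.support, a ∈ w1.support := by
          intro a ha
          have := hqsub ha
          rwa [SimpleGraph.Walk.support_reverse, List.mem_reverse] at this
        -- q : Walk y s avoids x and t
        have htq : t ∉ q.support := fun h =>
          hdisj t (hqsub' t h) (htail t w2.end_mem_support (Ne.symm hxt))
        -- w2 : Walk x t avoids s and y
        have hsw2 : s ∉ w2.support := fun h =>
          hdisj s w1.start_mem_support (htail s h (Ne.symm hxs))
        have hyw2 : y ∉ w2.support := fun h =>
          hdisj y hyw1 (htail y h (fun hyx => hxy.ne hyx.symm))
        have heq : s(x, y) ∉ q.edges := fun h => hxq (q.fst_mem_support_of_mem_edges h)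
        have hew2 : s(x, y) ∉ w2.edges := fun h =>
          hyw2 (w2.snd_mem_support_of_mem_edges h)
        -- distances
        have hd1 : (deleteVerts G {x, t}).edist s y ≤ (q.length : ℕ∞) := by
          have hmemq : ∀ p' ∈ q.reverse.edges, p' ∈ (deleteVerts G ({x, t} : Set V)).edgeSet := by
            intro p' hp'
            rw [SimpleGraph.Walk.edges_reverse, List.mem_reverse] at hp'
            refine key _ q heq ?_ p' hp'
            intro a ha
            rcases ha with rfl | rfl
            · exact hxq
            · exact htq
          have := SimpleGraph.edist_le (q.reverse.transfer _ hmemq)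
          rwa [SimpleGraph.Walk.length_transfer, SimpleGraph.Walk.length_reverse] at this
        have hd2 : (deleteVerts G {s, y}).edist x t ≤ (w2.length : ℕ∞) := by
          have hmem2 : ∀ p' ∈ w2.edges, p' ∈ (deleteVerts G ({s, y} : Set V)).edgeSet := by
            refine key _ w2 hew2 ?_
            intro a ha
            rcases ha with rfl | rfl
            · exact hsw2
            · exact hyw2
          have := SimpleGraph.edist_le (w2.transfer _ hmem2)
          rwa [SimpleGraph.Walk.length_transfer] at this
        have hlen1 : q.length + 1 = w1.length := by
          rw [← SimpleGraph.Walk.length_reverse w1]; exact hqlen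
        have hdle : (d : ℕ∞) ≤ ((q.length + w2.length : ℕ) : ℕ∞) := by
          refine le_trans h2 ?_
          push_cast
          exact add_le_add hd1 hd2
        rw [Nat.cast_le] at hdle
        omega
      · -- order s … x,y … t : use h1
        have hw2 : w2.IsPath := hw.dropUntil hxsup
        obtain ⟨p, hp, hxp, hpsub, hpe, hplen⟩ := exists_tail_of_mem_edges w2 hw2 he2
        have hyw2 : y ∈ w2.support := w2.snd_mem_support_of_mem_edges he2
        -- w1 : Walk s x avoids y and t
        have hyw1 : y ∉ w1.support := fun h =>
          hdisj y h (htail y hyw2 (fun hyx => hxy.ne hyx.symm))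
        have htw1 : t ∉ w1.support := fun h =>
          hdisj t h (htail t w2.end_mem_support (Ne.symm hxt))
        -- p : Walk y t avoids s and x
        have hsp : s ∉ p.support := fun h =>
          hdisj s w1.start_mem_support (htail s (hpsub h) (Ne.symm hxs))
        have hew1 : s(x, y) ∉ w1.edges := fun h =>
          hyw1 (w1.snd_mem_support_of_mem_edges h)
        have hep : s(x, y) ∉ p.edges := fun h => hxp (p.fst_mem_support_of_mem_edges h)
        have hd1 : (deleteVerts G {y, t}).edist s x ≤ (w1.length : ℕ∞) := by
          have hmem1 : ∀ p' ∈ w1.edges, p' ∈ (deleteVerts G ({y, t} : Set V)).edgeSet := by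
            refine key _ w1 hew1 ?_
            intro a ha
            rcases ha with rfl | rfl
            · exact hyw1
            · exact htw1
          have := SimpleGraph.edist_le (w1.transfer _ hmem1)
          rwa [SimpleGraph.Walk.length_transfer] at this
        have hd2 : (deleteVerts G {s, x}).edist y t ≤ (p.length : ℕ∞) := by
          have hmemp : ∀ p' ∈ p.edges, p' ∈ (deleteVerts G ({s, x} : Set V)).edgeSet := by
            refine key _ p hep ?_
            intro a ha
            rcases ha with rfl | rfl
            · exact hsp
            · exact hxp
          have := SimpleGraph.edist_le (p.transfer _ hmemp)
          rwa [SimpleGraph.Walk.length_transfer] at this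
        have hdle : (d : ℕ∞) ≤ ((w1.length + p.length : ℕ) : ℕ∞) := by
          refine le_trans h1 ?_
          push_cast
          exact add_le_add hd1 hd2
        rw [Nat.cast_le] at hdle
        omega
    · -- the path does not use the edge; transfer it to the erased edge set
      have hsub : ∀ p' ∈ w.edges,
          p' ∈ (SimpleGraph.fromEdgeSet (↑(E'.erase s(x, y)) : Set (Sym2 V))).edgeSet := by
        intro p' hp'
        have h1' := w.edges_subset_edgeSet hp'
        rw [SimpleGraph.edgeSet_fromEdgeSet] at h1' ⊢
        have hne : p' ≠ s(x, y) := fun h => hme (h ▸ hp')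
        refine ⟨?_, h1'.2⟩
        have : p' ∈ (insert s(x, y) E' : Finset (Sym2 V)) := by exact_mod_cast h1'.1
        rcases Finset.mem_insert.mp this with h | h
        · exact absurd h hne
        · exact_mod_cast Finset.mem_erase.mpr ⟨hne, h⟩
      exact ⟨w.transfer _ hsub, hw.transfer _, by rwa [SimpleGraph.Walk.length_transfer]⟩
  · rintro ⟨w, hw, hwl⟩
    have hsub : ∀ p' ∈ w.edges,
        p' ∈ (SimpleGraph.fromEdgeSet (↑(insert s(x, y) E') : Set (Sym2 V))).edgeSet := by
      intro p' hp'
      have h1' := w.edges_subset_edgeSet hp'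
      rw [SimpleGraph.edgeSet_fromEdgeSet] at h1' ⊢
      refine ⟨?_, h1'.2⟩
      have : p' ∈ E'.erase s(x, y) := by exact_mod_cast h1'.1
      exact_mod_cast Finset.mem_insert_of_mem (Finset.mem_erase.mp this).2
    exact ⟨w.transfer _ hsub, hw.transfer _, by rwa [SimpleGraph.Walk.length_transfer]⟩
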